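/- Let m ≥ 1, 1 ≤ r ≤ m and ℓ = m − r ≥ 1. Let γ be an integer with 0 ≤ γ < C(m, r), and let (ρ_{ℓ−1}, …, ρ₀) be its representation, i.e., nonnegative integers with ∑ ρ_i ≤ r and γ = ∑_{t=0}^{ℓ−1} h(ρ_t, r_t, t) where r_t = r − ∑_{q>t} ρ_q, h(p,r,t) = ∑_{i=0}^{p−1} C(r+t−i, r−i) for p > 0 and h(0,r,t) = 0. Set γ' = ∑_{t=0}^{ℓ−1} h₁(r_t, t), where h₁(r, t) = ∑_{j=0}^{t} ∑_{i=0}^{ρ_t−1} C(r+t−i, r+j−i) if ρ_t > 0 and h₁(r, t) = 0 if ρ_t = 0. Then there exists a set Γ of exactly γ r-element subsets of [m] such that the number of subsets S of [m] with |S| ≥ r, every r-element subset of which belongs to Γ, is at least γ'. -/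

import Mathlib

open Finset


lemma fin_card_filter_ico (m a b : ℕ) (hb : b ≤ m) :
    (Finset.univ.filter (fun x : Fin m => a ≤ (x : ℕ) ∧ (x : ℕ) < b)).card = b - a := by
  rw [← Nat.card_Ico a b]
  apply Finset.card_bij (fun (x : Fin m) _ => (x : ℕ))
  · intro x hx; simp only [mem_filter] at hx; simp [mem_Ico, hx.2.1, hx.2.2]
  · intro x _ y _ h; exact Fin.val_injective h
  · intro y hy
    simp only [mem_Ico] at hy
    exact ⟨⟨y, lt_of_lt_of_le hy.2 hb⟩, by simp [hy.1, hy.2], rfl⟩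

lemma fin_card_filter_le (m a : ℕ) :
    (Finset.univ.filter (fun x : Fin m => a ≤ (x : ℕ))).card = m - a := by
  rw [← fin_card_filter_ico m a m le_rfl]
  congr 1
  apply Finset.filter_congr
  intro x _
  simp [x.isLt]

namespace Stmt8

variable {l : ℕ} (ρ : Fin l → ℕ) (m : ℕ)

def sig (t : Fin l) : ℕ := ∑ q ∈ Finset.Ioi t, ρ q

def stt (t : Fin l) : ℕ := sig ρ t + (l - 1 - (t : ℕ))

def blk (t : Fin l) : Finset (Fin m) :=
  univ.filter (fun x => stt ρ t ≤ (x : ℕ) ∧ (x : ℕ) < stt ρ t + ρ t)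

def pre (t : Fin l) : Finset (Fin m) :=
  univ.filter (fun x => ∃ q, t < q ∧ stt ρ q ≤ (x : ℕ) ∧ (x : ℕ) < stt ρ q + ρ q)

def gnd (t : Fin l) : Finset (Fin m) :=
  univ.filter (fun x => stt ρ t ≤ (x : ℕ))

def Fam (t : Fin l) (k : ℕ) : Finset (Finset (Fin m)) :=
  univ.filter (fun S => S.card = k ∧
    S.filter (fun x : Fin m => (x : ℕ) < stt ρ t) = pre ρ m t ∧ ¬ blk ρ m t ⊆ S)

-- monotonicity
lemma sig_anti {t t' : Fin l} (h : t ≤ t') : sig ρ t' ≤ sig ρ t :=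
  Finset.sum_le_sum_of_subset (by intro q hq; simp only [mem_Ioi] at *; exact lt_of_le_of_lt h hq)

lemma sig_add {t t' : Fin l} (h : t < t') : sig ρ t' + ρ t' ≤ sig ρ t := by
  have : insert t' (Finset.Ioi t') ⊆ Finset.Ioi t := by
    intro q hq
    simp only [mem_insert, mem_Ioi] at *
    rcases hq with rfl | hq
    · exact h
    · exact h.trans hq
  calc sig ρ t' + ρ t' = ∑ q ∈ insert t' (Finset.Ioi t'), ρ q := by
        rw [Finset.sum_insert (by simp), add_comm]; rfl
    _ ≤ sig ρ t := Finset.sum_le_sum_of_subset this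

lemma stt_anti {t t' : Fin l} (h : t ≤ t') : stt ρ t' ≤ stt ρ t := by
  have := sig_anti ρ h
  have ht' : (t' : ℕ) < l := t'.isLt
  have h2 : (t : ℕ) ≤ (t' : ℕ) := h
  unfold stt; omega

lemma stt_add {t t' : Fin l} (h : t < t') : stt ρ t' + ρ t' + 1 ≤ stt ρ t := by
  have := sig_add ρ h
  have ht' : (t' : ℕ) < l := t'.isLt
  have h2 : (t : ℕ) < (t' : ℕ) := h
  unfold stt; omega


-- membership lemmas
lemma mem_blk {t : Fin l} {x : Fin m} :
    x ∈ blk ρ m t ↔ stt ρ t ≤ (x : ℕ) ∧ (x : ℕ) < stt ρ t + ρ t := by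
  simp [blk]

lemma mem_pre {t : Fin l} {x : Fin m} :
    x ∈ pre ρ m t ↔ ∃ q, t < q ∧ stt ρ q ≤ (x : ℕ) ∧ (x : ℕ) < stt ρ q + ρ q := by
  simp [pre]

lemma mem_gnd {t : Fin l} {x : Fin m} : x ∈ gnd ρ m t ↔ stt ρ t ≤ (x : ℕ) := by
  simp [gnd]

lemma blk_subset_gnd (t : Fin l) : blk ρ m t ⊆ gnd ρ m t := by
  intro x hx
  rw [mem_blk] at hx
  rw [mem_gnd]
  exact hx.1

lemma pre_lt {t : Fin l} {x : Fin m} (hx : x ∈ pre ρ m t) : (x : ℕ) < stt ρ t := by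
  rw [mem_pre] at hx
  obtain ⟨q, hq, _, h2⟩ := hx
  have := stt_add ρ hq
  omega

lemma blk_disjoint {t t' : Fin l} (h : t ≠ t') : Disjoint (blk ρ m t) (blk ρ m t') := by
  rw [Finset.disjoint_left]
  intro x hx hx'
  rw [mem_blk] at hx hx'
  rcases lt_or_gt_of_ne h with hlt | hlt
  · have := stt_add ρ hlt; omega
  · have := stt_add ρ hlt; omega

lemma pre_eq_biUnion (t : Fin l) : pre ρ m t = (Finset.Ioi t).biUnion (fun q => blk ρ m q) := by
  ext x
  simp only [mem_pre, Finset.mem_biUnion, mem_Ioi, mem_blk]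

lemma sig_le {r : ℕ} (hsum : ∑ i, ρ i ≤ r) (t : Fin l) : sig ρ t + ρ t ≤ r := by
  refine le_trans ?_ hsum
  calc sig ρ t + ρ t = ∑ q ∈ insert t (Finset.Ioi t), ρ q := by
        rw [Finset.sum_insert (by simp), add_comm]; rfl
    _ ≤ ∑ i, ρ i := Finset.sum_le_sum_of_subset (Finset.subset_univ _)

lemma blk_card {r : ℕ} (hsum : ∑ i, ρ i ≤ r) (hml : m = r + l) (t : Fin l) :
    (blk ρ m t).card = ρ t := by
  have h1 := sig_le ρ hsum t
  have h2 : (t : ℕ) < l := t.isLt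
  have hb : stt ρ t + ρ t ≤ m := by unfold stt; omega
  rw [blk, fin_card_filter_ico m _ _ hb]
  omega

lemma pre_card {r : ℕ} (hsum : ∑ i, ρ i ≤ r) (hml : m = r + l) (t : Fin l) :
    (pre ρ m t).card = sig ρ t := by
  rw [pre_eq_biUnion, Finset.card_biUnion]
  · exact Finset.sum_congr rfl (fun q _ => blk_card ρ m hsum hml q)
  · intro q _ q' _ h
    exact blk_disjoint ρ m h

lemma gnd_card {r : ℕ} (hsum : ∑ i, ρ i ≤ r) (hml : m = r + l) (t : Fin l) :
    (gnd ρ m t).card = (r - sig ρ t) + (t : ℕ) + 1 := by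
  have h1 := sig_le ρ hsum t
  have h2 : (t : ℕ) < l := t.isLt
  rw [gnd, fin_card_filter_le]
  unfold stt; omega


lemma pre_gnd_disj (t : Fin l) : ∀ x ∈ pre ρ m t, x ∉ gnd ρ m t := by
  intro x hx hx'
  have := pre_lt ρ m hx
  rw [mem_gnd] at hx'
  omega

lemma fam_card {r : ℕ} (hsum : ∑ i, ρ i ≤ r) (hml : m = r + l) (t : Fin l) (c : ℕ)
    (hc : ρ t ≤ c) :
    (Fam ρ m t (sig ρ t + c)).card =
      ((r - sig ρ t) + (t : ℕ) + 1).choose c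
        - ((r - sig ρ t) + (t : ℕ) + 1 - ρ t).choose (c - ρ t) := by
  classical
  set P := pre ρ m t with hP
  set B := blk ρ m t with hB
  set G := gnd ρ m t with hG
  have hGcard : G.card = (r - sig ρ t) + (t : ℕ) + 1 := gnd_card ρ m hsum hml t
  have hBcard : B.card = ρ t := blk_card ρ m hsum hml t
  have hPcard : P.card = sig ρ t := pre_card ρ m hsum hml t
  have hBG : B ⊆ G := blk_subset_gnd ρ m t
  -- Step A : bijection
  have stepA : (Fam ρ m t (sig ρ t + c)).card
      = ((G.powersetCard c).filter (fun S' => ¬ B ⊆ S')).card := by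
    apply Finset.card_bij' (fun S _ => S.filter (fun x : Fin m => stt ρ t ≤ (x : ℕ)))
      (fun S' _ => P ∪ S')
    · intro S hS
      simp only [Fam, mem_filter, mem_univ, true_and] at hS
      obtain ⟨h1, h2, h3⟩ := hS
      rw [Finset.mem_filter, Finset.mem_powersetCard]
      have hsplit : S.filter (fun x : Fin m => ¬ (x : ℕ) < stt ρ t)
          = S.filter (fun x : Fin m => stt ρ t ≤ (x : ℕ)) := by
        apply Finset.filter_congr; intro x _; simp [not_lt]
      have hcards := Finset.card_filter_add_card_filter_not
        (s := S) (p := fun x : Fin m => (x : ℕ) < stt ρ t)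
      rw [h2, hsplit] at hcards
      refine ⟨⟨?_, ?_⟩, ?_⟩
      · intro x hx
        rw [Finset.mem_filter] at hx
        rw [hG, mem_gnd]
        exact hx.2
      · have hp2 := hPcard
        rw [hP] at hp2
        omega
      · intro hcon
        exact h3 (hcon.trans (Finset.filter_subset _ _))
    · intro S' hS'
      rw [Finset.mem_filter, Finset.mem_powersetCard] at hS'
      obtain ⟨⟨hsub, hcard⟩, hnb⟩ := hS'
      have hdisj : Disjoint P S' := by
        rw [Finset.disjoint_left]
        intro x hx hx'
        exact pre_gnd_disj ρ m t x hx (hsub hx')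
      simp only [Fam, mem_filter, mem_univ, true_and]
      refine ⟨?_, ?_, ?_⟩
      · rw [Finset.card_union_of_disjoint hdisj, hPcard, hcard]
      · rw [Finset.filter_union]
        have e1 : P.filter (fun x : Fin m => (x : ℕ) < stt ρ t) = P :=
          Finset.filter_true_of_mem (fun x hx => pre_lt ρ m hx)
        have e2 : S'.filter (fun x : Fin m => (x : ℕ) < stt ρ t) = ∅ := by
          apply Finset.filter_false_of_mem
          intro x hx
          have := hsub hx
          rw [hG, mem_gnd] at this
          omega
        rw [e1, e2, Finset.union_empty]
      · intro hcon
        apply hnb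
        intro x hx
        rcases Finset.mem_union.mp (hcon hx) with h | h
        · exact (pre_gnd_disj ρ m t x h (hBG hx)).elim
        · exact h
    · intro S hS
      simp only [Fam, mem_filter, mem_univ, true_and] at hS
      obtain ⟨h1, h2, h3⟩ := hS
      rw [hP, ← h2]
      have hsplit : S.filter (fun x : Fin m => stt ρ t ≤ (x : ℕ))
          = S.filter (fun x : Fin m => ¬ (x : ℕ) < stt ρ t) := by
        apply Finset.filter_congr; intro x _; simp [not_lt]
      rw [hsplit]
      exact Finset.filter_union_filter_not_eq _ S
    · intro S' hS'
      rw [Finset.mem_filter, Finset.mem_powersetCard] at hS'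
      obtain ⟨⟨hsub, hcard⟩, hnb⟩ := hS'
      rw [Finset.filter_union]
      have e1 : P.filter (fun x : Fin m => stt ρ t ≤ (x : ℕ)) = ∅ := by
        apply Finset.filter_false_of_mem
        intro x hx
        have := pre_lt ρ m hx
        omega
      have e2 : S'.filter (fun x : Fin m => stt ρ t ≤ (x : ℕ)) = S' := by
        apply Finset.filter_true_of_mem
        intro x hx
        have := hsub hx
        rw [hG, mem_gnd] at this
        exact this
      rw [e1, e2, Finset.empty_union]
  -- Step C : bad sets
  have stepC : ((G.powersetCard c).filter (fun S' => B ⊆ S')).card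
      = ((r - sig ρ t) + (t : ℕ) + 1 - ρ t).choose (c - ρ t) := by
    have : ((G.powersetCard c).filter (fun S' => B ⊆ S')).card
        = ((G \ B).powersetCard (c - ρ t)).card := by
      apply Finset.card_bij' (fun S' _ => S' \ B) (fun U _ => U ∪ B)
      · intro S' hS'
        rw [Finset.mem_filter, Finset.mem_powersetCard] at hS'
        obtain ⟨⟨hsub, hcard⟩, hb⟩ := hS'
        rw [Finset.mem_powersetCard]
        constructor
        · exact Finset.sdiff_subset_sdiff hsub le_rfl
        · rw [Finset.card_sdiff_of_subset hb, hcard, hBcard]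
      · intro U hU
        rw [Finset.mem_powersetCard] at hU
        obtain ⟨hsub, hcard⟩ := hU
        have hdisj : Disjoint U B := by
          rw [Finset.disjoint_left]
          intro x hx hx'
          exact (Finset.mem_sdiff.mp (hsub hx)).2 hx'
        rw [Finset.mem_filter, Finset.mem_powersetCard]
        refine ⟨⟨?_, ?_⟩, Finset.subset_union_right⟩
        · exact Finset.union_subset (hsub.trans (Finset.sdiff_subset)) hBG
        · rw [Finset.card_union_of_disjoint hdisj, hcard, hBcard]
          omega
      · intro S' hS'
        rw [Finset.mem_filter, Finset.mem_powersetCard] at hS'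
        exact Finset.sdiff_union_of_subset hS'.2
      · intro U hU
        rw [Finset.mem_powersetCard] at hU
        apply Finset.union_sdiff_cancel_right
        rw [Finset.disjoint_left]
        intro x hx hx'
        exact (Finset.mem_sdiff.mp (hU.1 hx)).2 hx'
    rw [this, Finset.card_powersetCard, Finset.card_sdiff_of_subset hBG, hGcard, hBcard]
  have stepB := Finset.card_filter_add_card_filter_not
    (s := G.powersetCard c) (p := fun S' => B ⊆ S')
  have hA : (G.powersetCard c).card = ((r - sig ρ t) + (t : ℕ) + 1).choose c := by
    rw [Finset.card_powersetCard, hGcard]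
  omega


lemma blk_subset_pre {t t' : Fin l} (h : t < t') : blk ρ m t' ⊆ pre ρ m t := by
  intro x hx
  rw [mem_blk] at hx
  rw [mem_pre]
  exact ⟨t', h, hx.1, hx.2⟩

lemma fam_disj {t t' : Fin l} (h : t < t') {k k' : ℕ} {S : Finset (Fin m)}
    (h1 : S ∈ Fam ρ m t k) (h2 : S ∈ Fam ρ m t' k') : False := by
  simp only [Fam, mem_filter, mem_univ, true_and] at h1 h2
  apply h2.2.2
  refine (blk_subset_pre ρ m h).trans ?_
  rw [← h1.2.1]
  exact Finset.filter_subset _ _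

lemma mem_fam_of_subset {r k : ℕ} {t : Fin l} {S T : Finset (Fin m)}
    (hS : S ∈ Fam ρ m t k) (hTS : T ⊆ S) (hT : T.card = r) :
    ∃ q, T ∈ Fam ρ m q r := by
  classical
  simp only [Fam, mem_filter, mem_univ, true_and] at hS
  obtain ⟨hc, hpre, hblk⟩ := hS
  have hF : t ∈ univ.filter (fun q : Fin l => ¬ blk ρ m q ⊆ T) := by
    simp only [mem_filter, mem_univ, true_and]
    exact fun hcon => hblk (hcon.trans hTS)
  set F := univ.filter (fun q : Fin l => ¬ blk ρ m q ⊆ T) with hFdef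
  have hne : F.Nonempty := ⟨t, hF⟩
  set q' := F.max' hne with hq'
  have hq'F : q' ∈ F := F.max'_mem hne
  have hq'blk : ¬ blk ρ m q' ⊆ T := by
    have := hq'F
    rw [hFdef, mem_filter] at this
    exact this.2
  have htq' : t ≤ q' := F.le_max' t hF
  refine ⟨q', ?_⟩
  simp only [Fam, mem_filter, mem_univ, true_and]
  refine ⟨hT, ?_, hq'blk⟩
  ext x
  rw [Finset.mem_filter, mem_pre]
  constructor
  · rintro ⟨hxT, hxlt⟩
    have hxS : x ∈ S := hTS hxT
    have hxt : (x : ℕ) < stt ρ t := lt_of_lt_of_le hxlt (stt_anti ρ htq')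
    have : x ∈ pre ρ m t := by
      rw [← hpre, Finset.mem_filter]
      exact ⟨hxS, hxt⟩
    rw [mem_pre] at this
    obtain ⟨q, hq, h1, h2⟩ := this
    have hq'q : q' < q := by
      by_contra hcon
      push_neg at hcon
      have := stt_anti ρ hcon
      omega
    exact ⟨q, hq'q, h1, h2⟩
  · rintro ⟨q, hq, h1, h2⟩
    have hqT : blk ρ m q ⊆ T := by
      by_contra hcon
      have : q ∈ F := by rw [hFdef, mem_filter]; exact ⟨mem_univ _, hcon⟩
      have := F.le_max' q this
      exact absurd hq (not_lt.mpr this)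
    have hxq : x ∈ blk ρ m q := by rw [mem_blk]; exact ⟨h1, h2⟩
    have := stt_add ρ hq
    exact ⟨hqT hxq, by omega⟩


end Stmt8

lemma choose_tele (n k p : ℕ) (hpk : p ≤ k) (hpn : p ≤ n) :
    (n + 1 - p).choose (k - p) + ∑ i ∈ Finset.range p, (n - i).choose (k - i)
      = (n + 1).choose k := by
  induction p with
  | zero => simp
  | succ p ih =>
      rw [Finset.sum_range_succ]
      have h1 : p ≤ k := by omega
      have h2 : p ≤ n := by omega
      have e1 : n + 1 - p = (n - p) + 1 := by omega
      have e2 : k - p = (k - p - 1) + 1 := by omega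
      have pas : (n + 1 - p).choose (k - p)
          = (n - p).choose (k - p - 1) + (n - p).choose (k - p) := by
        rw [e1, e2, Nat.choose_succ_succ]
        have : k - p - 1 + 1 = k - p := by omega
        rw [Nat.succ_eq_add_one, this]
      have e3 : n + 1 - (p+1) = n - p := by omega
      have e4 : k - (p+1) = k - p - 1 := by omega
      rw [← ih h1 h2, e3, e4, pas]
      ring



/-- `h(p, r, t) = ∑_{i=0}^{p−1} C(r+t−i, r−i)` (equal to `0` when `p = 0`). -/
def hfun (p r t : ℕ) : ℕ := ∑ i ∈ Finset.range p, (r + t - i).choose (r - i)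

/-- `h₁` depending on `ρ_t`: `h₁(ρ, r, t) = ∑_{j=0}^{t} ∑_{i=0}^{ρ−1} C(r+t−i, r+j−i)`
(equal to `0` when `ρ = 0`). -/
def h1fun (ρ r t : ℕ) : ℕ :=
  ∑ j ∈ Finset.range (t + 1), ∑ i ∈ Finset.range ρ, (r + t - i).choose (r + j - i)

lemma hfun_eq (p k t : ℕ) (hpk : p ≤ k) :
    hfun p k t = (k + t + 1).choose k - (k + t + 1 - p).choose (k - p) := by
  have h := choose_tele (k + t) k p hpk (hpk.trans (Nat.le_add_right _ _))
  unfold hfun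
  omega

lemma h1fun_eq (p k t : ℕ) (hpk : p ≤ k) :
    h1fun p k t = ∑ j ∈ Finset.range (t + 1),
      ((k + t + 1).choose (k + j) - (k + t + 1 - p).choose (k + j - p)) := by
  unfold h1fun
  refine Finset.sum_congr rfl (fun j _ => ?_)
  have h := choose_tele (k + t) (k + j) p (hpk.trans (Nat.le_add_right _ _))
    (hpk.trans (Nat.le_add_right _ _))
  omega

open Stmt8

/-- Given `0 ≤ γ < C(m, r)` with representation `(ρ_{ℓ−1},…,ρ₀)`
(so `∑ ρ_i ≤ r` and `γ = ∑_t h(ρ_t, r_t, t)` where `r_t = r − ∑_{q>t} ρ_q`), setting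
`γ' = ∑_t h₁(r_t, t)`, there is a set `Γ` of exactly `γ` r-element subsets of `[m]` such
that at least `γ'` coordinates `S` (subsets of `[m]` with `|S| ≥ r` all of whose
r-element subsets lie in `Γ`) can be deleted. -/
theorem stmt_8 (m r l : ℕ) (hm : 1 ≤ m) (hr : 1 ≤ r) (hrm : r ≤ m)
    (hl : l = m - r) (hl1 : 1 ≤ l)
    (γ : ℕ) (hγ : γ < m.choose r)
    (ρ : Fin l → ℕ) (hρ : ∑ i, ρ i ≤ r)
    (hrep : γ = ∑ t : Fin l, hfun (ρ t) (r - ∑ q ∈ Finset.Ioi t, ρ q) (t : ℕ)) :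
    ∃ Γ : Finset (Finset (Fin m)),
      (∀ T ∈ Γ, T.card = r) ∧ Γ.card = γ ∧
      (∑ t : Fin l, h1fun (ρ t) (r - ∑ q ∈ Finset.Ioi t, ρ q) (t : ℕ))
        ≤ (Finset.univ.filter (fun S : Finset (Fin m) =>
            r ≤ S.card ∧ ∀ T ∈ S.powerset, T.card = r → T ∈ Γ)).card := by
  classical
  have hml : m = r + l := by omega
  refine ⟨Finset.univ.biUnion (fun t : Fin l => Fam ρ m t r), ?_, ?_, ?_⟩
  · intro T hT
    rw [Finset.mem_biUnion] at hT
    obtain ⟨t, _, hT⟩ := hT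
    simp only [Fam, Finset.mem_filter] at hT
    exact hT.2.1
  · rw [Finset.card_biUnion]
    · rw [hrep]
      refine Finset.sum_congr rfl (fun t _ => ?_)
      have hsl := sig_le ρ hρ t
      have hσ : (∑ q ∈ Finset.Ioi t, ρ q) = sig ρ t := rfl
      rw [hσ]
      have hc : ρ t ≤ r - sig ρ t := by omega
      have hr' : r = sig ρ t + (r - sig ρ t) := by omega
      rw [hfun_eq _ _ _ hc]
      conv_lhs => rw [hr']
      rw [fam_card ρ m hρ hml t _ hc]
    · intro t _ t' _ hne
      rw [Function.onFun, Finset.disjoint_left]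
      intro S hS hS'
      rcases lt_or_gt_of_ne hne with h | h
      · exact fam_disj ρ m h hS hS'
      · exact fam_disj ρ m h hS' hS
  · set Γ := Finset.univ.biUnion (fun t : Fin l => Fam ρ m t r) with hΓ
    set B := Finset.univ.biUnion (fun t : Fin l =>
      (Finset.range ((t : ℕ) + 1)).biUnion (fun j => Fam ρ m t (r + j))) with hBdef
    have hsub : B ⊆ Finset.univ.filter (fun S : Finset (Fin m) =>
        r ≤ S.card ∧ ∀ T ∈ S.powerset, T.card = r → T ∈ Γ) := by
      intro S hS
      rw [hBdef, Finset.mem_biUnion] at hS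
      obtain ⟨t, _, hS⟩ := hS
      rw [Finset.mem_biUnion] at hS
      obtain ⟨j, _, hS⟩ := hS
      have hcard : S.card = r + j := by
        simp only [Fam, Finset.mem_filter] at hS
        exact hS.2.1
      rw [Finset.mem_filter]
      refine ⟨Finset.mem_univ _, by omega, ?_⟩
      intro T hT hTr
      rw [Finset.mem_powerset] at hT
      obtain ⟨q, hq⟩ := mem_fam_of_subset ρ m hS hT hTr
      rw [hΓ, Finset.mem_biUnion]
      exact ⟨q, Finset.mem_univ _, hq⟩
    refine le_trans (le_of_eq ?_) (Finset.card_le_card hsub)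
    rw [hBdef, Finset.card_biUnion]
    · refine Finset.sum_congr rfl (fun t _ => ?_)
      rw [Finset.card_biUnion]
      · have hsl := sig_le ρ hρ t
        have hσ : (∑ q ∈ Finset.Ioi t, ρ q) = sig ρ t := rfl
        rw [hσ, h1fun_eq _ _ _ (by omega : ρ t ≤ r - sig ρ t)]
        refine Finset.sum_congr rfl (fun j hj => ?_)
        have hc : ρ t ≤ (r - sig ρ t) + j := by omega
        have he : r + j = sig ρ t + ((r - sig ρ t) + j) := by omega
        rw [he, fam_card ρ m hρ hml t _ hc]
      · intro j _ j' _ hne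
        rw [Function.onFun, Finset.disjoint_left]
        intro S hS hS'
        simp only [Fam, Finset.mem_filter] at hS hS'
        exact hne (by omega : j = j')
    · intro t _ t' _ hne
      rw [Function.onFun, Finset.disjoint_left]
      intro S hS hS'
      rw [Finset.mem_biUnion] at hS hS'
      obtain ⟨j, _, hS⟩ := hS
      obtain ⟨j', _, hS'⟩ := hS'
      rcases lt_or_gt_of_ne hne with h | h
      · exact fam_disj ρ m h hS hS'
      · exact fam_disj ρ m h hS' hS
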